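/- Let G be a locally finite graph. Suppose there exist a vertex g_0 and a real number λ > 1 such that for every integer n ≥ 0 and every subset A of the sphere S_G(g_0, n), the set A* of vertices of S_G(g_0, n+1) adjacent to a vertex of A satisfies |A*| ≥ λ·|A|. Then for every d ≥ 0 and every constant c ≥ 1, the graph G does not have the {c·n^d}-containment property; in particular G does not have the O(n^d)-containment property for any d ≥ 0. -/

import Mathlib

open SimpleGraph

namespace Firefighter

variable {V : Type*}

/-- The set of vertices on fire at time `n`, starting from initial fire `X0`, with fire spreading
along paths of length at most `r` avoiding the protected sets `W 1, ..., W n`. -/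
def fireSet (G : SimpleGraph V) (r : ℕ) (X0 : Set V) (W : ℕ → Set V) : ℕ → Set V
  | 0 => X0
  | n + 1 => {v | ∃ u ∈ fireSet G r X0 W n, ∃ p : G.Walk u v, p.length ≤ r ∧
      ∀ w ∈ p.support, ∀ i, 1 ≤ i → i ≤ n + 1 → w ∉ W i}

/-- `W` is an `(f, r)`-containment strategy for the initial fire `X0` in `G`. -/
def IsContainmentStrategy (G : SimpleGraph V) (r : ℕ) (f : ℕ → ℕ)
    (X0 : Set V) (W : ℕ → Set V) : Prop :=
  (∀ n, 1 ≤ n → (W n).Finite ∧ (W n).ncard ≤ f n) ∧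
  (∀ n, Disjoint (fireSet G r X0 W n) (W (n + 1))) ∧
  (∃ N, 0 < N ∧ ∀ n, N ≤ n → fireSet G r X0 W n = fireSet G r X0 W N)

/-- `G` has the `(f, r)`-containment property. -/
def HasContainmentProperty (G : SimpleGraph V) (r : ℕ) (f : ℕ → ℕ) : Prop :=
  ∀ X0 : Set V, X0.Finite → ∃ W : ℕ → Set V, IsContainmentStrategy G r f X0 W

/-- A graph is locally finite if every vertex has finitely many neighbors. -/
def LocallyFiniteGraph (G : SimpleGraph V) : Prop := ∀ v, (G.neighborSet v).Finite

/-- The ball of radius `n` about the vertex `g0` (in the combinatorial metric). -/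
def ball (G : SimpleGraph V) (g0 : V) (n : ℕ) : Set V :=
  {v | G.Reachable g0 v ∧ G.dist g0 v ≤ n}

/-- The sphere of radius `n` about the vertex `g0` (in the combinatorial metric). -/
def sphere (G : SimpleGraph V) (g0 : V) (n : ℕ) : Set V :=
  {v | G.Reachable g0 v ∧ G.dist g0 v = n}

/-- For `T` a subset of the sphere of radius `n`, `nextAdj G g0 n T` is the set `T*` of vertices
of the sphere of radius `n+1` adjacent to at least one vertex of `T`. -/
def nextAdj (G : SimpleGraph V) (g0 : V) (n : ℕ) (T : Set V) : Set V :=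
  {v ∈ sphere G g0 (n + 1) | ∃ u ∈ T, G.Adj u v}

/-- A graph has bounded degree if there is a uniform finite bound on vertex degrees. -/
def BoundedDegree (G : SimpleGraph V) : Prop :=
  ∃ D : ℕ, ∀ v, (G.neighborSet v).Finite ∧ (G.neighborSet v).ncard ≤ D

/-- Two graphs are quasi-isometric. -/
def QuasiIsometric {V' : Type*} (G : SimpleGraph V) (H : SimpleGraph V') : Prop :=
  ∃ c : ℕ, 1 ≤ c ∧ ∃ (φ : V → V') (ψ : V' → V),
    (∀ g1 g2, H.dist (φ g1) (φ g2) ≤ c * G.dist g1 g2 + c) ∧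
    (∀ h1 h2, G.dist (ψ h1) (ψ h2) ≤ c * H.dist h1 h2 + c) ∧
    (∀ g, G.dist g (ψ (φ g)) ≤ c) ∧
    (∀ h, H.dist h (φ (ψ h)) ≤ c)

/-- `f ≼ g` : there is `c > 0` with `f n ≤ c * g (c*n + c) + c` for all `n ≥ c`. -/
def Preceq (f g : ℕ → ℕ) : Prop :=
  ∃ c : ℕ, 0 < c ∧ ∀ n, c ≤ n → f n ≤ c * g (c * n + c) + c

/-- `f` and `g` have equivalent asymptotic growth. -/
def AsympEquiv (f g : ℕ → ℕ) : Prop := Preceq f g ∧ Preceq g f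

/-- The ball of radius `n` about a set `X` of vertices. -/
def ballSet (G : SimpleGraph V) (X : Set V) (n : ℕ) : Set V :=
  {v | ∃ u ∈ X, ∃ p : G.Walk u v, p.length ≤ n}

lemma sphere_finite (G : SimpleGraph V) (hlf : LocallyFiniteGraph G) (g0 : V) :
    ∀ n, (sphere G g0 n).Finite := by
  intro n
  induction n with
  | zero =>
    refine (Set.finite_singleton g0).subset ?_
    rintro v ⟨hr, hd⟩
    have : g0 = v := (hr.dist_eq_zero_iff).mp hd
    simp [this.symm]
  | succ n ih =>
    refine (ih.biUnion fun u _ => hlf u).subset ?_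
    rintro v ⟨hr, hd⟩
    obtain ⟨p, hp⟩ := hr.exists_walk_length_eq_dist
    rw [hd] at hp
    have hvne : v ≠ g0 := by
      rintro rfl
      rw [SimpleGraph.dist_self] at hd
      omega
    obtain ⟨u, hadj, q', hq⟩ := SimpleGraph.Walk.exists_eq_cons_of_ne hvne p.reverse
    have hq'len : q'.length = n := by
      have := congrArg SimpleGraph.Walk.length hq
      simp [hp] at this
      omega
    have hru : G.Reachable g0 u := hr.trans hadj.reachable
    have hdu_le : G.dist g0 u ≤ n := by
      have := SimpleGraph.dist_le q'.reverse
      simpa [hq'len] using this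
    have hdu_ge : n ≤ G.dist g0 u := by
      obtain ⟨w, hw⟩ := hru.exists_walk_length_eq_dist
      have := SimpleGraph.dist_le (w.concat hadj.symm)
      rw [SimpleGraph.Walk.length_concat, hw, hd] at this
      omega
    have : v ∈ G.neighborSet u := hadj.symm
    exact Set.mem_biUnion ⟨hru, le_antisymm hdu_le hdu_ge⟩ this

lemma ball_finite (G : SimpleGraph V) (hlf : LocallyFiniteGraph G) (g0 : V) (n : ℕ) :
    (ball G g0 n).Finite := by
  refine (Set.Finite.biUnion (Set.finite_Iic n) fun k _ => sphere_finite G hlf g0 k).subset ?_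
  rintro v ⟨hr, hd⟩
  exact Set.mem_biUnion (Set.mem_Iic.mpr hd) ⟨hr, rfl⟩

lemma sphere_card (G : SimpleGraph V) (hlf : LocallyFiniteGraph G) (g0 : V)
    (lam : ℝ) (hlam : 1 < lam)
    (hexp : ∀ n : ℕ, ∀ A ⊆ sphere G g0 n,
      lam * (A.ncard : ℝ) ≤ ((nextAdj G g0 n A).ncard : ℝ)) :
    ∀ n : ℕ, lam ^ n ≤ ((sphere G g0 n).ncard : ℝ) := by
  intro n
  induction n with
  | zero =>
    have hmem : g0 ∈ sphere G g0 0 := ⟨Reachable.refl g0, SimpleGraph.dist_self⟩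
    have := (Set.ncard_pos (sphere_finite G hlf g0 0)).mpr ⟨g0, hmem⟩
    rw [pow_zero]; exact Nat.one_le_cast.mpr this
  | succ n ih =>
    have h1 := hexp n (sphere G g0 n) (le_refl _)
    have h2 : (nextAdj G g0 n (sphere G g0 n)).ncard ≤ (sphere G g0 (n+1)).ncard :=
      Set.ncard_le_ncard (fun v hv => hv.1) (sphere_finite G hlf g0 (n+1))
    have hlam0 : (0:ℝ) < lam := lt_trans one_pos hlam
    calc lam ^ (n+1) = lam * lam ^ n := by ring
    _ ≤ lam * ((sphere G g0 n).ncard : ℝ) := by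
        exact mul_le_mul_of_nonneg_left ih hlam0.le
    _ ≤ ((nextAdj G g0 n (sphere G g0 n)).ncard : ℝ) := h1
    _ ≤ ((sphere G g0 (n+1)).ncard : ℝ) := Nat.cast_le.mpr h2

lemma fireSet_subset_ball (G : SimpleGraph V) (g0 : V) (m : ℕ) (W : ℕ → Set V) :
    ∀ n, fireSet G 1 (ball G g0 m) W n ⊆ ball G g0 (m + n) := by
  intro n
  induction n with
  | zero => rw [Nat.add_zero]; exact fun v hv => hv
  | succ n ih =>
    rintro v ⟨u, hu, p, hp, -⟩
    obtain ⟨hru, hdu⟩ := ih hu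
    refine ⟨hru.trans ⟨p⟩, ?_⟩
    obtain ⟨w, hw⟩ := hru.exists_walk_length_eq_dist
    have := SimpleGraph.dist_le (w.append p)
    rw [SimpleGraph.Walk.length_append, hw] at this
    omega

lemma fire_avoid (G : SimpleGraph V) (X0 : Set V) (W : ℕ → Set V)
    (hd : ∀ n, Disjoint (fireSet G 1 X0 W n) (W (n + 1))) :
    ∀ n v, v ∈ fireSet G 1 X0 W n → ∀ i, 1 ≤ i → i ≤ n + 1 → v ∉ W i := by
  intro n v hv i hi1 hi2
  rcases eq_or_lt_of_le hi2 with heq | hlt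
  · subst heq
    exact fun hw => Set.disjoint_left.mp (hd n) hv hw
  · match n with
    | 0 => omega
    | k + 1 =>
      obtain ⟨u, hu, p, hp, hav⟩ := hv
      exact hav v p.end_mem_support i hi1 (by omega)

lemma ncard_biUnion_le' {α ι : Type*} [DecidableEq ι] (s : Finset ι) (t : ι → Set α) :
    (⋃ i ∈ s, t i).ncard ≤ ∑ i ∈ s, (t i).ncard := by
  induction s using Finset.induction_on with
  | empty => simp
  | insert _ _ ha ih =>
    rw [Finset.sum_insert ha, Finset.set_biUnion_insert]
    exact le_trans (Set.ncard_union_le _ _) (add_le_add_right ih _)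


/-- if every subset `A` of every sphere about `g0` satisfies `|A*| ≥ λ·|A|` with
`λ > 1`, then `G` has no polynomial containment property. -/
theorem stmt12 {V : Type*} (G : SimpleGraph V) (hlf : LocallyFiniteGraph G) (g0 : V)
    (lam : ℝ) (hlam : 1 < lam)
    (hexp : ∀ n : ℕ, ∀ A ⊆ sphere G g0 n,
      lam * (A.ncard : ℝ) ≤ ((nextAdj G g0 n A).ncard : ℝ)) :
    ∀ d : ℕ, ∀ c : ℕ, 1 ≤ c → ¬ HasContainmentProperty G 1 (fun n => c * n ^ d) := by
  classical
  intro d c hc hcont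
  have hlam0 : (0:ℝ) < lam := lt_trans one_pos hlam
  have hr1 : ‖(1/lam : ℝ)‖ < 1 := by
    rw [Real.norm_eq_abs, abs_of_pos (by positivity)]
    rw [div_lt_one hlam0]; exact hlam
  set g : ℕ → ℝ := fun i => (i:ℝ)^(d+1) * (1/lam)^i with hgdef
  have hgsum : Summable g := summable_pow_mul_geometric_of_norm_lt_one (d+1) hr1
  set g' : ℕ → ℝ := fun i => g (i+1) with hg'def
  have hg'sum : Summable g' := (summable_nat_add_iff 1).mpr hgsum
  have hg'nonneg : ∀ i, 0 ≤ g' i := by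
    intro i; simp only [hg'def, hgdef]; positivity
  set S : ℝ := (c:ℝ) * ∑' i, g' i with hSdef
  obtain ⟨m, hm⟩ := pow_unbounded_of_one_lt (R := ℝ) (S + 1) hlam
  set X0 : Set V := ball G g0 m with hX0def
  obtain ⟨W, hW1, hW2, N, hN0, hNfix⟩ := hcont X0 (ball_finite G hlf g0 m)
  set T : ℕ → Set V := fun n => fireSet G 1 X0 W n ∩ sphere G g0 (m+n) with hTdef
  have hTfin : ∀ n, (T n).Finite :=
    fun n => (sphere_finite G hlf g0 (m+n)).subset Set.inter_subset_right
  have hTsph : ∀ n, T n ⊆ sphere G g0 (m+n) := fun n => Set.inter_subset_right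
  -- base case
  have hbase : lam ^ m ≤ ((T 0).ncard : ℝ) := by
    refine le_trans (sphere_card G hlf g0 lam hlam hexp m) ?_
    have hsub : sphere G g0 m ⊆ T 0 := by
      intro v hv
      exact ⟨⟨hv.1, hv.2.le⟩, by simpa using hv⟩
    exact_mod_cast Nat.cast_le.mpr (Set.ncard_le_ncard hsub (hTfin 0))
  -- recurrence
  have hrec : ∀ n : ℕ, lam * ((T n).ncard : ℝ) - (c:ℝ) * ((n:ℝ)+1)^(d+1)
      ≤ ((T (n+1)).ncard : ℝ) := by
    intro n
    set A := nextAdj G g0 (m+n) (T n) with hAdef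
    have hA : lam * ((T n).ncard:ℝ) ≤ (A.ncard:ℝ) := hexp (m+n) (T n) (hTsph n)
    set U : Set V := ⋃ i ∈ Finset.Icc 1 (n+1), W i with hUdef
    have hUfin : U.Finite :=
      Set.Finite.biUnion (Finset.Icc 1 (n+1)).finite_toSet
        (fun i hi => (hW1 i (Finset.mem_Icc.mp hi).1).1)
    have hUcard : ((U.ncard:ℝ)) ≤ (c:ℝ) * ((n:ℝ)+1)^(d+1) := by
      have h1 : U.ncard ≤ ∑ i ∈ Finset.Icc 1 (n+1), (W i).ncard := ncard_biUnion_le' _ _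
      have h2 : ∑ i ∈ Finset.Icc 1 (n+1), (W i).ncard ≤ ∑ i ∈ Finset.Icc 1 (n+1), c * (n+1)^d := by
        refine Finset.sum_le_sum fun i hi => ?_
        refine le_trans (hW1 i (Finset.mem_Icc.mp hi).1).2 ?_
        exact Nat.mul_le_mul_left c (Nat.pow_le_pow_left (Finset.mem_Icc.mp hi).2 d)
      have h3 : ∑ i ∈ Finset.Icc 1 (n+1), c * (n+1)^d = (n+1) * (c * (n+1)^d) := by
        rw [Finset.sum_const, Nat.card_Icc]; simp [Nat.smul_one_eq_cast]
      have h4 : U.ncard ≤ c * (n+1)^(d+1) := by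
        calc U.ncard ≤ (n+1) * (c * (n+1)^d) := by omega
        _ = c * (n+1)^(d+1) := by ring
      calc ((U.ncard:ℝ)) ≤ ((c * (n+1)^(d+1) : ℕ) : ℝ) := Nat.cast_le.mpr h4
      _ = (c:ℝ) * ((n:ℝ)+1)^(d+1) := by push_cast; ring
    have hsub : A \ U ⊆ T (n+1) := by
      rintro v ⟨⟨hvs, u, hu, hadj⟩, hvU⟩
      have hvW : ∀ i, 1 ≤ i → i ≤ n+1 → v ∉ W i := by
        intro i h1 h2 hw
        exact hvU (Set.mem_iUnion₂.mpr ⟨i, Finset.mem_Icc.mpr ⟨h1, h2⟩, hw⟩)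
      refine ⟨⟨u, hu.1, SimpleGraph.Walk.cons hadj SimpleGraph.Walk.nil, by simp, ?_⟩, hvs⟩
      intro w hw i h1 h2
      simp only [SimpleGraph.Walk.support_cons, SimpleGraph.Walk.support_nil,
        List.mem_cons, List.mem_singleton, List.not_mem_nil, or_false] at hw
      rcases hw with rfl | rfl
      · exact fire_avoid G X0 W hW2 n w hu.1 i h1 h2
      · exact hvW i h1 h2
    have hAfin : A.Finite := (sphere_finite G hlf g0 (m+n+1)).subset (fun v hv => hv.1)
    have h5 : ((A \ U).ncard : ℝ) ≤ ((T (n+1)).ncard:ℝ) :=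
      Nat.cast_le.mpr (Set.ncard_le_ncard hsub (hTfin (n+1)))
    have h6 : (A.ncard:ℝ) ≤ ((A \ U).ncard:ℝ) + (U.ncard:ℝ) := by
      have hsub2 : A ⊆ (A \ U) ∪ U := by
        intro x hx
        by_cases h : x ∈ U
        · exact Or.inr h
        · exact Or.inl ⟨hx, h⟩
      have hfin2 : ((A \ U) ∪ U).Finite := ((hAfin.subset Set.diff_subset).union hUfin)
      have := le_trans (Set.ncard_le_ncard hsub2 hfin2) (Set.ncard_union_le _ _)
      exact_mod_cast Nat.cast_le.mpr this
    linarith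
  -- lower bound by induction
  have key : ∀ n : ℕ, lam ^ n * (lam ^ m - (c:ℝ) * ∑ i ∈ Finset.range n, g' i)
      ≤ ((T n).ncard : ℝ) := by
    intro n
    induction n with
    | zero => simpa using hbase
    | succ n ih =>
      have hgn : lam^(n+1) * g' n = ((n:ℝ)+1)^(d+1) := by
        show lam^(n+1) * (((n+1:ℕ):ℝ)^(d+1) * (1/lam)^(n+1)) = _
        push_cast
        field_simp
        rw [← mul_pow, mul_one_div_cancel hlam0.ne', one_pow]
      have hstep : lam * (lam ^ n * (lam ^ m - (c:ℝ) * ∑ i ∈ Finset.range n, g' i))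
          - (c:ℝ) * ((n:ℝ)+1)^(d+1)
          = lam^(n+1) * (lam ^ m - (c:ℝ) * ∑ i ∈ Finset.range (n+1), g' i) := by
        rw [Finset.sum_range_succ]
        linear_combination (c:ℝ) * hgn
      have h4 : lam * (lam^n * (lam ^ m - (c:ℝ) * ∑ i ∈ Finset.range n, g' i))
          ≤ lam * ((T n).ncard : ℝ) := mul_le_mul_of_nonneg_left ih hlam0.le
      linarith [hrec n]
  have hlow : ∀ n : ℕ, lam ^ n * (lam ^ m - S) ≤ ((T n).ncard : ℝ) := by
    intro n
    refine le_trans ?_ (key n)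
    have hsum_le : ∑ i ∈ Finset.range n, g' i ≤ ∑' i, g' i :=
      Summable.sum_le_tsum _ (fun i _ => hg'nonneg i) hg'sum
    have h7 : (c:ℝ) * ∑ i ∈ Finset.range n, g' i ≤ S :=
      mul_le_mul_of_nonneg_left hsum_le (Nat.cast_nonneg c)
    have h8 : lam ^ m - S ≤ lam ^ m - (c:ℝ) * ∑ i ∈ Finset.range n, g' i := by linarith
    exact mul_le_mul_of_nonneg_left h8 (pow_nonneg hlam0.le n)
  have hTne : ∀ n, (T n).Nonempty := by
    intro n
    have e1 : (1:ℝ) ≤ lam ^ n := one_le_pow₀ hlam.le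
    have e2 : (1:ℝ) ≤ lam ^ m - S := by linarith
    have e3 : (1:ℝ) ≤ lam ^ n * (lam ^ m - S) := by nlinarith
    have := le_trans e3 (hlow n)
    apply Set.nonempty_of_ncard_ne_zero
    intro h0
    rw [h0] at this
    norm_num at this
  obtain ⟨v, hvf, hvs⟩ := hTne (N+1)
  rw [hNfix (N+1) (Nat.le_succ N)] at hvf
  have hvb := fireSet_subset_ball G g0 m W N hvf
  have hd1 := hvb.2
  have hd2 := hvs.2
  omega


end Firefighter
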